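/- Let κ be an uncountable cardinal with κ = κ^{<κ}. Assume every Σ¹₁ subset of κ^κ satisfies the Hurewicz dichotomy. Then for every Σ¹₁ set A ⊆ κ^κ and every closed subset C of κ^κ homeomorphic to κ^κ, there is a closed subset D ⊆ C homeomorphic to κ^κ with either D ⊆ A or D ∩ A = ∅. -/
import Mathlib


open Cardinal Set Topology

universe u

/-- The bounded topology on `K → Y`: basic open sets are determined by an
initial segment of values. -/
def bTop (K : Type u) [LinearOrder K] (Y : Type u) : TopologicalSpace (K → Y) :=
  TopologicalSpace.generateFrom
    {U | ∃ (b : K) (s : K → Y), U = {x | ∀ i, i < b → x i = s i}}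

/-- `A` is κ-compact: every open cover (for the bounded topology) has a
subcover of size `< #K`. -/
def KCompact (K : Type u) [LinearOrder K] {Y : Type u} (A : Set (K → Y)) : Prop :=
  ∀ 𝒰 : Set (Set (K → Y)), (∀ U ∈ 𝒰, IsOpen[bTop K Y] U) → A ⊆ ⋃₀ 𝒰 →
    ∃ 𝒱 ⊆ 𝒰, #𝒱 < #K ∧ A ⊆ ⋃₀ 𝒱

/-- `B` is a `K_κ` subset: a union of κ-many κ-compact sets. -/
def IsKK (K : Type u) [LinearOrder K] (B : Set (K → K)) : Prop :=
  ∃ C : K → Set (K → K), (∀ b, KCompact K (C b)) ∧ B = ⋃ b, C b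

/-- Nodes of the tree `Y^{<K}`: sequences of length `b`, for `b : K`. -/
abbrev Nd (K : Type u) [LinearOrder K] (Y : Type u) := Σ b : K, (Set.Iio b → Y)

/-- Restriction of a node to a smaller length. -/
def ndRes (K : Type u) [LinearOrder K] {Y : Type u} (p : Nd K Y) (c : K) (h : c ≤ p.1) :
    Nd K Y :=
  ⟨c, fun i => p.2 ⟨i.1, lt_of_lt_of_le i.2 h⟩⟩

/-- Restriction of a branch `x : K → Y` to length `b`. -/
def xRes (K : Type u) [LinearOrder K] {Y : Type u} (x : K → Y) (b : K) : Nd K Y :=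
  ⟨b, fun i => x i.1⟩

/-- `q` extends `p` as a sequence. -/
def NdExt (K : Type u) [LinearOrder K] {Y : Type u} (q p : Nd K Y) : Prop :=
  ∃ h : p.1 ≤ q.1, ∀ i : Set.Iio p.1, q.2 ⟨i.1, lt_of_lt_of_le i.2 h⟩ = p.2 i

/-- A subtree of `Y^{<K}`: a set of nodes closed under restriction. -/
def IsSubtree (K : Type u) [LinearOrder K] {Y : Type u} (T : Set (Nd K Y)) : Prop :=
  ∀ p ∈ T, ∀ c, ∀ h : c ≤ p.1, ndRes K p c h ∈ T

/-- The body `[T]`: the set of `K`-branches through `T`. -/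
def body (K : Type u) [LinearOrder K] {Y : Type u} (T : Set (Nd K Y)) : Set (K → Y) :=
  {x | ∀ b : K, xRes K x b ∈ T}

/-- `T` is pruned: every node is extended by a branch. -/
def Pruned (K : Type u) [LinearOrder K] {Y : Type u} (T : Set (Nd K Y)) : Prop :=
  ∀ p ∈ T, ∃ x ∈ body K T, NdExt K (xRes K x p.1) p

/-- `b` is a limit element: not least, and with no immediate predecessor. -/
def IsLimElt (K : Type u) [LinearOrder K] (b : K) : Prop :=
  (∃ c, c < b) ∧ ∀ c, c < b → ∃ d, c < d ∧ d < b

/-- Superclosed: closed under unions of increasing sequences of length `< K`. -/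
def Superclosed (K : Type u) [LinearOrder K] {Y : Type u} (T : Set (Nd K Y)) : Prop :=
  ∀ p : Nd K Y, IsLimElt K p.1 → (∀ c, ∀ h : c < p.1, ndRes K p c h.le ∈ T) → p ∈ T

/-- The values at position `p.1` realized by extensions of `p` in `T`, i.e. the
immediate successors of `p` in `T`. -/
def splitVals (K : Type u) [LinearOrder K] {Y : Type u} (T : Set (Nd K Y)) (p : Nd K Y) :
    Set Y :=
  {a | ∃ q ∈ T, ∃ h : p.1 < q.1,
    (∀ i : Set.Iio p.1, q.2 ⟨i.1, i.2.trans h⟩ = p.2 i) ∧ q.2 ⟨p.1, h⟩ = a}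

/-- A perfect tree: a nonempty superclosed subtree in which every node is
extended by a 2-splitting node. -/
def PerfectTree (K : Type u) [LinearOrder K] (T : Set (Nd K K)) : Prop :=
  T.Nonempty ∧ IsSubtree K T ∧ Superclosed K T ∧
    ∀ p ∈ T, ∃ q ∈ T, NdExt K q p ∧
      ∃ a ∈ splitVals K T q, ∃ a' ∈ splitVals K T q, a ≠ a'

/-- A κ-Miller tree: a nonempty superclosed subtree in which every node is
extended by a κ-splitting node. -/
def MillerTree (K : Type u) [LinearOrder K] (T : Set (Nd K K)) : Prop :=
  T.Nonempty ∧ IsSubtree K T ∧ Superclosed K T ∧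
    ∀ p ∈ T, ∃ q ∈ T, NdExt K q p ∧ #K ≤ #(splitVals K T q)

/-- A κ-tree: a subtree of height `K` all of whose levels have size `< #K`. -/
def KTree (K : Type u) [LinearOrder K] {Y : Type u} (T : Set (Nd K Y)) : Prop :=
  (∀ b : K, ∃ t : Set.Iio b → Y, (⟨b, t⟩ : Nd K Y) ∈ T) ∧
    ∀ b : K, #{t : Set.Iio b → Y | (⟨b, t⟩ : Nd K Y) ∈ T} < #K

/-- A κ-Aronszajn tree: a κ-tree with no branch. -/
def Aronszajn (K : Type u) [LinearOrder K] (S : Set (Nd K K)) : Prop :=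
  IsSubtree K S ∧ KTree K S ∧ body K S = ∅

/-- The tree property for `K`: every κ-tree has a branch. -/
def TreeProp (K : Type u) [LinearOrder K] : Prop :=
  ∀ T : Set (Nd K K), IsSubtree K T → KTree K T → (body K T).Nonempty

/-- weak compactness: inaccessibility together with the tree property. -/
def WComp (K : Type u) [LinearOrder K] : Prop :=
  (#K).IsInaccessible ∧ TreeProp K

/-- `C` is homeomorphic to the generalized Baire space `K → K`. -/
def HomeoToBaire (K : Type u) [LinearOrder K] (C : Set (K → K)) : Prop :=
  letI := bTop K K
  Nonempty (↥C ≃ₜ (K → K))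

/-- `C` is homeomorphic to the generalized Cantor space `K → ULift.{u} Bool`. -/
def HomeoToCantor (K : Type u) [LinearOrder K] (C : Set (K → K)) : Prop :=
  letI := bTop K K
  letI : TopologicalSpace (K → ULift.{u} Bool) := bTop K (ULift.{u} Bool)
  Nonempty (↥C ≃ₜ (K → ULift.{u} Bool))

/-- The Hurewicz dichotomy for `A`. -/
def HD (K : Type u) [LinearOrder K] (A : Set (K → K)) : Prop :=
  (∃ B, IsKK K B ∧ A ⊆ B) ∨
    ∃ C ⊆ A, IsClosed[bTop K K] C ∧ HomeoToBaire K C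

/-- The Miller-tree Hurewicz dichotomy for `A`. -/
def MillerHD (K : Type u) [LinearOrder K] (A : Set (K → K)) : Prop :=
  (∃ B, IsKK K B ∧ A ⊆ B) ∨ ∃ T, MillerTree K T ∧ body K T ⊆ A

/-- Σ¹₁ subsets of `K → K`: projections of closed subsets of the product. -/
def Sigma11 (K : Type u) [LinearOrder K] (A : Set (K → K)) : Prop :=
  letI := bTop K K
  ∃ C : Set ((K → K) × (K → K)), IsClosed C ∧ A = Prod.fst '' C

/-- The κ-perfect set property. -/
def PSP (K : Type u) [LinearOrder K] (A : Set (K → K)) : Prop :=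
  #A ≤ #K ∨ ∃ C ⊆ A, IsClosed[bTop K K] C ∧ HomeoToCantor K C

/-- `A ⊆ K → K` is bounded. -/
def BddSet (K : Type u) [LinearOrder K] (A : Set (K → K)) : Prop :=
  ∃ x : K → K, ∀ y ∈ A, ∀ i, y i ≤ x i

/-- `A ⊆ K → K` is eventually bounded. -/
def EvBddSet (K : Type u) [LinearOrder K] (A : Set (K → K)) : Prop :=
  ∃ x : K → K, ∀ y ∈ A, ∃ b : K, ∀ i, b ≤ i → y i ≤ x i

/-- Nodes of the product tree `K^{<K} × K^{<K}` (pairs of equal length). -/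
abbrev PNd (K : Type u) [LinearOrder K] := Σ b : K, (Set.Iio b → K) × (Set.Iio b → K)

/-- Subtree of the product tree: closed under simultaneous restriction. -/
def IsPSubtree (K : Type u) [LinearOrder K] (T : Set (PNd K)) : Prop :=
  ∀ p ∈ T, ∀ c, ∀ h : c ≤ p.1,
    (⟨c, fun i => p.2.1 ⟨i.1, lt_of_lt_of_le i.2 h⟩,
        fun i => p.2.2 ⟨i.1, lt_of_lt_of_le i.2 h⟩⟩ : PNd K) ∈ T

/-- The projection `p[T]` of the set of branches of a product tree to the first
coordinate. -/
def pProj (K : Type u) [LinearOrder K] (T : Set (PNd K)) : Set (K → K) :=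
  {x | ∃ y : K → K, ∀ b : K,
    (⟨b, fun i => x i.1, fun i => y i.1⟩ : PNd K) ∈ T}

/-- An `∃^x`-perfect embedding into a product tree `T`. -/
def PerfEmb (K : Type u) [LinearOrder K] (T : Set (PNd K)) (e : Nd K (ULift.{u} Bool) → PNd K) : Prop :=
  (∀ u, e u ∈ T) ∧
  (∀ u u' : Nd K (ULift.{u} Bool), ∀ h : u.1 < u'.1,
     (∀ i : Set.Iio u.1, u'.2 ⟨i.1, i.2.trans h⟩ = u.2 i) →
     ∃ h' : (e u).1 < (e u').1,
       (∀ i : Set.Iio (e u).1, (e u').2.1 ⟨i.1, i.2.trans h'⟩ = (e u).2.1 i) ∧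
       (∀ i : Set.Iio (e u).1, (e u').2.2 ⟨i.1, i.2.trans h'⟩ = (e u).2.2 i)) ∧
  (∀ u u' : Nd K (ULift.{u} Bool), ¬ NdExt K u u' → ¬ NdExt K u' u →
     ¬ NdExt K ⟨(e u).1, (e u).2.1⟩ ⟨(e u').1, (e u').2.1⟩ ∧
     ¬ NdExt K ⟨(e u').1, (e u').2.1⟩ ⟨(e u).1, (e u).2.1⟩) ∧
  (∀ u : Nd K (ULift.{u} Bool), IsLimElt K u.1 → ∀ d, d < (e u).1 →
     ∃ c, ∃ h : c < u.1, d < (e (ndRes K u c h.le)).1)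

/-- The immediate extension `u⌢⟨a⟩` of a node `u` by a value `a`. -/
def extNd (K : Type u) [LinearOrder K] [SuccOrder K] (u : Nd K K) (a : K) : Nd K K :=
  ⟨Order.succ u.1, fun i => if h : i.1 < u.1 then u.2 ⟨i.1, h⟩ else a⟩

/-- An `∃^x`-superperfect embedding into a product tree `T`. -/
def SuperPerfEmb (K : Type u) [LinearOrder K] [SuccOrder K] (T : Set (PNd K))
    (e : Nd K K → PNd K) : Prop :=
  (∀ u, e u ∈ T) ∧
  (∀ u u' : Nd K K, ∀ h : u.1 < u'.1,
     (∀ i : Set.Iio u.1, u'.2 ⟨i.1, i.2.trans h⟩ = u.2 i) →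
     ∃ h' : (e u).1 < (e u').1,
       (∀ i : Set.Iio (e u).1, (e u').2.1 ⟨i.1, i.2.trans h'⟩ = (e u).2.1 i) ∧
       (∀ i : Set.Iio (e u).1, (e u').2.2 ⟨i.1, i.2.trans h'⟩ = (e u).2.2 i)) ∧
  (∀ u : Nd K K, IsLimElt K u.1 → ∀ d, d < (e u).1 →
     ∃ c, ∃ h : c < u.1, d < (e (ndRes K u c h.le)).1) ∧
  (∀ u : Nd K K, ∃ γ : K, (e u).1 ≤ γ ∧
     ∃ hlen : ∀ a : K, γ < (e (extNd K u a)).1,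
       ∀ a b : K, a ≠ b →
         (∀ i : Set.Iio γ,
           (e (extNd K u a)).2.1 ⟨i.1, i.2.trans (hlen a)⟩ =
           (e (extNd K u b)).2.1 ⟨i.1, i.2.trans (hlen b)⟩) ∧
         (e (extNd K u a)).2.1 ⟨γ, hlen a⟩ ≠ (e (extNd K u b)).2.1 ⟨γ, hlen b⟩)

set_option linter.unusedSectionVars false

section Helpers
variable (K : Type u) [LinearOrder K]

lemma hu_nonempty (hunc : ℵ₀ < #K) : Nonempty K := by
  exact Cardinal.mk_ne_zero_iff.mp (aleph0_pos.trans hunc).ne'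

lemma hu_exists_gt (hseg : ∀ b : K, #(Set.Iio b) < #K) (hunc : ℵ₀ < #K) (b : K) :
    ∃ c, b < c := by
  by_contra h
  push_neg at h
  have huniv : (Set.univ : Set K) = insert b (Set.Iio b) := by
    ext c
    simp only [Set.mem_univ, Set.mem_insert_iff, Set.mem_Iio, true_iff]
    rcases (h c).lt_or_eq with h' | h'
    exacts [Or.inr h', Or.inl h']
  have : #K ≤ #(Set.Iio b) + 1 := by
    calc #K = #(Set.univ : Set K) := (Cardinal.mk_univ).symm
    _ = #(insert b (Set.Iio b) : Set K) := by rw [huniv]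
    _ ≤ #(Set.Iio b) + 1 := Cardinal.mk_insert_le
  exact absurd this (not_le.mpr (Cardinal.add_lt_of_lt hunc.le (hseg b) (lt_trans one_lt_aleph0 hunc)))

lemma hu_regular (hunc : ℵ₀ < #K) (hpow : Cardinal.powerlt #K #K = #K) :
    (#K).IsRegular := by
  constructor
  · exact hunc.le
  · by_contra h
    push_neg at h
    have h1 : #K < #K ^ Ordinal.cof (Cardinal.ord #K) := Cardinal.lt_power_cof hunc.le
    have h2 : #K ^ Ordinal.cof (Cardinal.ord #K) ≤ Cardinal.powerlt #K #K :=
      Cardinal.le_powerlt _ h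
    rw [hpow] at h2
    exact absurd (h1.trans_le h2) (lt_irrefl _)

lemma hu_bdd (hseg : ∀ b : K, #(Set.Iio b) < #K) (hunc : ℵ₀ < #K)
    (hpow : Cardinal.powerlt #K #K = #K) (S : Set K) (hS : #S < #K) :
    ∃ h : K, ∀ c ∈ S, c ≤ h := by
  have hne := hu_nonempty K hunc
  by_contra h
  push_neg at h
  have hcov : (Set.univ : Set K) ⊆ ⋃ c ∈ S, Set.Iio c := by
    intro x _
    rcases h x with ⟨c, hc, hlt⟩
    exact Set.mem_biUnion hc hlt
  have h1 : #K ≤ #S * ⨆ c : S, #(Set.Iio c.1) := by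
    calc #K = #(Set.univ : Set K) := (Cardinal.mk_univ).symm
    _ ≤ #(⋃ c ∈ S, Set.Iio c) := Cardinal.mk_le_mk_of_subset hcov
    _ ≤ #S * ⨆ c : S, #(Set.Iio c.1) := Cardinal.mk_biUnion_le _ _
  have hreg := hu_regular K hunc hpow
  have h2 : (⨆ c : S, #(Set.Iio c.1)) < #K :=
    Cardinal.iSup_lt_of_isRegular hreg hS (fun c => hseg c.1)
  exact absurd h1 (not_le.mpr (Cardinal.mul_lt_of_lt hunc.le hS h2))

/-- Separation: a point not in a κ-compact set is separated by an initial segment. -/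
lemma hu_sep (hseg : ∀ b : K, #(Set.Iio b) < #K) (hunc : ℵ₀ < #K)
    (hpow : Cardinal.powerlt #K #K = #K) (E : Set (K → K)) (hE : KCompact K E)
    (x : K → K) (hx : x ∉ E) :
    ∃ h : K, ∀ y ∈ E, ∃ i, i < h ∧ y i ≠ x i := by
  letI : TopologicalSpace (K → K) := bTop K K
  set 𝒰 : Set (Set (K → K)) :=
    {U | ∃ (c : K) (s : K → K), U = {z | ∀ i, i < c → z i = s i} ∧ x ∉ U} with h𝒰
  have hopen : ∀ U ∈ 𝒰, IsOpen U := by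
    rintro U ⟨c, s, rfl, -⟩
    exact TopologicalSpace.isOpen_generateFrom_of_mem ⟨c, s, rfl⟩
  have hcov : E ⊆ ⋃₀ 𝒰 := by
    intro y hy
    have hne : y ≠ x := fun h => hx (h ▸ hy)
    have : ∃ i, y i ≠ x i := by
      by_contra h; push_neg at h; exact hne (funext h)
    rcases this with ⟨i, hi⟩
    rcases hu_exists_gt K hseg hunc i with ⟨c, hc⟩
    refine ⟨{z | ∀ j, j < c → z j = y j}, ⟨c, y, rfl, ?_⟩, fun j _ => rfl⟩
    intro hxm
    exact hi (hxm i hc).symm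
  rcases hE 𝒰 hopen hcov with ⟨𝒱, h𝒱𝒰, h𝒱card, h𝒱cov⟩
  -- bound the lengths
  have hcs : ∀ V : 𝒱, ∃ (c : K) (s : K → K), V.1 = {z | ∀ i, i < c → z i = s i} ∧ x ∉ V.1 :=
    fun V => h𝒱𝒰 V.2
  choose cf sf hVeq hVx using hcs
  rcases hu_bdd K hseg hunc hpow (Set.range cf)
      (lt_of_le_of_lt Cardinal.mk_range_le h𝒱card) with ⟨h, hh⟩
  refine ⟨h, fun y hy => ?_⟩
  rcases h𝒱cov hy with ⟨V, hV, hyV⟩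
  have hVle : cf ⟨V, hV⟩ ≤ h := hh _ ⟨⟨V, hV⟩, rfl⟩
  have hx' : x ∉ V := hVx ⟨V, hV⟩
  have he : V = {z | ∀ i, i < cf ⟨V, hV⟩ → z i = sf ⟨V, hV⟩ i} := hVeq ⟨V, hV⟩
  rw [he] at hx' hyV
  have : ∃ i, i < cf ⟨V, hV⟩ ∧ x i ≠ sf ⟨V, hV⟩ i := by
    by_contra hc; push_neg at hc
    exact hx' (fun i hi => hc i hi)
  rcases this with ⟨i, hi, hne⟩
  exact ⟨i, lt_of_lt_of_le hi hVle, fun h' => hne ((hyV i hi) ▸ h'.symm ▸ rfl)⟩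

/-- Coordinate projections of κ-compact sets are small. -/
lemma hu_proj (hseg : ∀ b : K, #(Set.Iio b) < #K) (hunc : ℵ₀ < #K)
    (E : Set (K → K)) (hE : KCompact K E) (b : K) :
    #{a : K | ∃ y ∈ E, y b = a} < #K := by
  letI : TopologicalSpace (K → K) := bTop K K
  rcases hu_exists_gt K hseg hunc b with ⟨c, hbc⟩
  set 𝒰 : Set (Set (K → K)) :=
    {U | ∃ s : K → K, U = {z | ∀ i, i < c → z i = s i}} with h𝒰
  have hopen : ∀ U ∈ 𝒰, IsOpen U := by
    rintro U ⟨s, rfl⟩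
    exact TopologicalSpace.isOpen_generateFrom_of_mem ⟨c, s, rfl⟩
  have hcov : E ⊆ ⋃₀ 𝒰 := fun y _ => ⟨_, ⟨y, rfl⟩, fun j _ => rfl⟩
  rcases hE 𝒰 hopen hcov with ⟨𝒱, h𝒱𝒰, h𝒱card, h𝒱cov⟩
  have hcs : ∀ V : 𝒱, ∃ s : K → K, V.1 = {z | ∀ i, i < c → z i = s i} := fun V => h𝒱𝒰 V.2
  choose sf hVeq using hcs
  have hsub : {a : K | ∃ y ∈ E, y b = a} ⊆ Set.range (fun V : 𝒱 => sf V b) := by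
    rintro a ⟨y, hy, rfl⟩
    rcases h𝒱cov hy with ⟨V, hV, hyV⟩
    have he : V = {z | ∀ i, i < c → z i = sf ⟨V, hV⟩ i} := hVeq ⟨V, hV⟩
    rw [he] at hyV
    exact ⟨⟨V, hV⟩, (hyV b hbc).symm⟩
  exact lt_of_le_of_lt (le_trans (Cardinal.mk_le_mk_of_subset hsub) Cardinal.mk_range_le) h𝒱card

/-- κ-compact intersect closed is κ-compact. -/
lemma hu_inter_closed (hunc : ℵ₀ < #K) (E : Set (K → K)) (hE : KCompact K E)
    (C : Set (K → K)) (hC : IsClosed[bTop K K] C) : KCompact K (E ∩ C) := by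
  letI : TopologicalSpace (K → K) := bTop K K
  intro 𝒰 hopen hcov
  have hopen' : ∀ U ∈ insert Cᶜ 𝒰, IsOpen U := by
    rintro U (rfl | hU)
    · exact hC.isOpen_compl
    · exact hopen U hU
  have hcov' : E ⊆ ⋃₀ insert Cᶜ 𝒰 := by
    intro y hy
    by_cases hyC : y ∈ C
    · rcases hcov ⟨hy, hyC⟩ with ⟨U, hU, hyU⟩
      exact ⟨U, Set.mem_insert_of_mem _ hU, hyU⟩
    · exact ⟨Cᶜ, Set.mem_insert _ _, hyC⟩
  rcases hE _ hopen' hcov' with ⟨𝒱, h𝒱, hcard, hcov𝒱⟩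
  refine ⟨𝒱 ∩ 𝒰, Set.inter_subset_right, lt_of_le_of_lt (Cardinal.mk_le_mk_of_subset Set.inter_subset_left) hcard, ?_⟩
  rintro y ⟨hyE, hyC⟩
  rcases hcov𝒱 hyE with ⟨V, hV, hyV⟩
  rcases h𝒱 hV with (rfl | hVU)
  · exact absurd hyC hyV
  · exact ⟨V, ⟨hV, hVU⟩, hyV⟩


/-- Homeomorphic transfer of κ-compactness from a subset of a closed copy. -/
lemma hu_homeo (K : Type u) [LinearOrder K] (C : Set (K → K)) (D : Set (K → K))
    (hDC : D ⊆ C) (hD : KCompact K D)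
    (φ : @Homeomorph ↥C (K → K) (@instTopologicalSpaceSubtype _ _ (bTop K K)) (bTop K K)) :
    KCompact K (⇑φ '' {z : ↥C | z.val ∈ D}) := by
  letI : TopologicalSpace (K → K) := bTop K K
  intro 𝒰 hopen hcov
  classical
  set g : Set (K → K) → Set (K → K) := fun U =>
    if h : ∃ V, IsOpen V ∧ (Subtype.val : ↥C → (K → K)) ⁻¹' V = ⇑φ ⁻¹' U
    then h.choose else ∅ with hg
  have hgspec : ∀ U ∈ 𝒰, IsOpen (g U) ∧
      (Subtype.val : ↥C → (K → K)) ⁻¹' (g U) = ⇑φ ⁻¹' U := by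
    intro U hU
    have hop : IsOpen (⇑φ ⁻¹' U) := (φ.continuous).isOpen_preimage U (hopen U hU)
    have hex : ∃ V, IsOpen V ∧ (Subtype.val : ↥C → (K → K)) ⁻¹' V = ⇑φ ⁻¹' U :=
      isOpen_induced_iff.mp hop
    simp only [hg, dif_pos hex]
    exact hex.choose_spec
  have hopen' : ∀ V ∈ g '' 𝒰, IsOpen V := by
    rintro V ⟨U, hU, rfl⟩; exact (hgspec U hU).1
  have hcov' : D ⊆ ⋃₀ (g '' 𝒰) := by
    intro y hy
    have hyC : y ∈ C := hDC hy
    have : φ ⟨y, hyC⟩ ∈ ⋃₀ 𝒰 := hcov ⟨⟨y, hyC⟩, hy, rfl⟩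
    rcases this with ⟨U, hU, hmem⟩
    have : (⟨y, hyC⟩ : ↥C) ∈ (Subtype.val : ↥C → (K → K)) ⁻¹' (g U) := by
      rw [(hgspec U hU).2]; exact hmem
    exact ⟨g U, ⟨U, hU, rfl⟩, this⟩
  rcases hD _ hopen' hcov' with ⟨𝒱', h𝒱', hcard', hcov𝒱'⟩
  have hpick : ∀ V : 𝒱', ∃ U, U ∈ 𝒰 ∧ g U = V.1 := by
    rintro ⟨V, hV⟩
    rcases h𝒱' hV with ⟨U, hU, rfl⟩
    exact ⟨U, hU, rfl⟩
  choose pf hpf𝒰 hpfg using hpick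
  refine ⟨Set.range pf, ?_, lt_of_le_of_lt Cardinal.mk_range_le hcard', ?_⟩
  · rintro U ⟨V, rfl⟩; exact hpf𝒰 V
  · rintro w ⟨z, hz, rfl⟩
    rcases hcov𝒱' hz with ⟨V, hV, hzV⟩
    refine ⟨pf ⟨V, hV⟩, ⟨⟨V, hV⟩, rfl⟩, ?_⟩
    have : z ∈ (Subtype.val : ↥C → (K → K)) ⁻¹' (g (pf ⟨V, hV⟩)) := by
      rw [hpfg ⟨V, hV⟩]; exact hzV
    rw [(hgspec _ (hpf𝒰 ⟨V, hV⟩)).2] at this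
    exact this

/-- Σ¹₁ is closed under intersection with closed sets. -/
lemma hu_sigma11_inter (K : Type u) [LinearOrder K] (A : Set (K → K)) (hA : Sigma11 K A)
    (C : Set (K → K)) (hC : IsClosed[bTop K K] C) : Sigma11 K (A ∩ C) := by
  letI : TopologicalSpace (K → K) := bTop K K
  rcases hA with ⟨F, hF, hFA⟩
  refine ⟨F ∩ (Prod.fst ⁻¹' C), hF.inter (hC.preimage continuous_fst), ?_⟩
  ext x
  constructor
  · rintro ⟨hxA, hxC⟩
    rw [hFA] at hxA
    rcases hxA with ⟨p, hp, rfl⟩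
    exact ⟨p, ⟨hp, hxC⟩, rfl⟩
  · rintro ⟨p, ⟨hpF, hpC⟩, rfl⟩
    exact ⟨hFA ▸ ⟨p, hpF, rfl⟩, hpC⟩

end Helpers

/-- If all Σ¹₁ sets satisfy the Hurewicz dichotomy, then for every Σ¹₁ set `A`
and every closed copy `C` of the generalized Baire space there is a closed copy
`D ⊆ C` of the generalized Baire space with `D ⊆ A` or `D ∩ A = ∅`. -/
theorem measurability_from_hurewicz (K : Type u) [LinearOrder K] [WellFoundedLT K]
    (hseg : ∀ b : K, #(Set.Iio b) < #K)
    (hunc : ℵ₀ < #K) (hpow : Cardinal.powerlt #K #K = #K)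
    (hHD : ∀ A : Set (K → K), Sigma11 K A → HD K A)
    (A : Set (K → K)) (hA : Sigma11 K A)
    (C : Set (K → K)) (hCcl : IsClosed[bTop K K] C) (hCh : HomeoToBaire K C) :
    ∃ D ⊆ C, IsClosed[bTop K K] D ∧ HomeoToBaire K D ∧
      (D ⊆ A ∨ D ∩ A = ∅) := by
  classical
  letI : TopologicalSpace (K → K) := bTop K K
  rcases hHD (A ∩ C) (hu_sigma11_inter K A hA C hCcl) with
    ⟨B, ⟨E, hEc, hBeq⟩, hsub⟩ | ⟨D, hDsub, hDcl, hDh⟩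
  swap
  · exact ⟨D, fun x hx => (hDsub hx).2, hDcl, hDh, Or.inl (fun x hx => (hDsub hx).1)⟩
  set A₂ : Set (K → K) := C ∩ (⋃ b, E b)ᶜ with hA₂def
  have hA₂sig : Sigma11 K A₂ := by
    refine ⟨{p : (K → K) × (K → K) |
      p.1 ∈ C ∧ ∀ b, ∀ z ∈ E b, ∃ i, i < p.2 b ∧ z i ≠ p.1 i}, ?_, ?_⟩
    · rw [← isOpen_compl_iff, isOpen_iff_forall_mem_open]
      rintro ⟨x, y⟩ hp
      by_cases hxC : x ∈ C
      · have hex : ∃ b, ∃ z ∈ E b, ∀ i, i < y b → z i = x i := by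
          by_contra hc
          push_neg at hc
          exact hp ⟨hxC, fun b z hz => hc b z hz⟩
        rcases hex with ⟨b, z, hz, hagree⟩
        rcases hu_exists_gt K hseg hunc b with ⟨b', hbb'⟩
        refine ⟨{x' | ∀ i, i < y b → x' i = x i} ×ˢ {y' | ∀ i, i < b' → y' i = y i},
          ?_, ?_, ?_⟩
        · rintro ⟨x', y'⟩ ⟨hx', hy'⟩ hF
          have hyb : y' b = y b := hy' b hbb'
          rcases hF.2 b z hz with ⟨i, hi, hne⟩
          have hi' : i < y b := by rw [← hyb]; exact hi
          exact hne ((hagree i hi').trans (hx' i hi').symm)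
        · have h1 : IsOpen {x' : K → K | ∀ i, i < y b → x' i = x i} :=
            TopologicalSpace.isOpen_generateFrom_of_mem
              (g := {U : Set (K → K) | ∃ (c : K) (s : K → K), U = {x : K → K | ∀ i, i < c → x i = s i}})
              ⟨y b, x, rfl⟩
          have h2 : IsOpen {y' : K → K | ∀ i, i < b' → y' i = y i} :=
            TopologicalSpace.isOpen_generateFrom_of_mem
              (g := {U : Set (K → K) | ∃ (c : K) (s : K → K), U = {x : K → K | ∀ i, i < c → x i = s i}})
              ⟨b', y, rfl⟩
          exact h1.prod h2
        · exact Set.mem_prod.mpr ⟨fun i _ => rfl, fun i _ => rfl⟩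
      · refine ⟨Cᶜ ×ˢ Set.univ, ?_, (hCcl.isOpen_compl).prod isOpen_univ,
          Set.mem_prod.mpr ⟨hxC, trivial⟩⟩
        rintro ⟨x', y'⟩ ⟨hx', -⟩ hF
        exact hx' hF.1
    · ext x
      constructor
      · rintro ⟨hxC, hxB⟩
        have hsep : ∀ b, ∃ h : K, ∀ z ∈ E b, ∃ i, i < h ∧ z i ≠ x i := fun b =>
          hu_sep K hseg hunc hpow (E b) (hEc b) x
            (fun h => hxB (Set.mem_iUnion.mpr ⟨b, h⟩))
        choose y hy using hsep
        exact ⟨(x, y), ⟨hxC, fun b z hz => hy b z hz⟩, rfl⟩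
      · rintro ⟨p, hpF, rfl⟩
        refine ⟨hpF.1, fun hmem => ?_⟩
        rcases Set.mem_iUnion.mp hmem with ⟨b, hb⟩
        rcases hpF.2 b p.1 hb with ⟨i, -, hne⟩
        exact hne rfl
  rcases hHD A₂ hA₂sig with ⟨B₂, ⟨E₂, hE₂c, hB₂eq⟩, hsub₂⟩ | ⟨D, hDsub, hDcl, hDh⟩
  swap
  · refine ⟨D, fun x hx => (hDsub hx).1, hDcl, hDh, Or.inr ?_⟩
    ext x
    simp only [Set.mem_inter_iff, Set.mem_empty_iff_false, iff_false, not_and]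
    intro hxD hxA
    have h2 := hDsub hxD
    exact h2.2 (hBeq ▸ hsub ⟨hxA, h2.1⟩)
  exfalso
  obtain ⟨φ⟩ := hCh
  have hH : ∀ b, KCompact K (⇑φ '' {z : ↥C | z.val ∈ E b ∩ C}) := fun b =>
    hu_homeo K C (E b ∩ C) Set.inter_subset_right
      (hu_inter_closed K hunc (E b) (hEc b) C hCcl) φ
  have hH₂ : ∀ b, KCompact K (⇑φ '' {z : ↥C | z.val ∈ E₂ b ∩ C}) := fun b =>
    hu_homeo K C (E₂ b ∩ C) Set.inter_subset_right
      (hu_inter_closed K hunc (E₂ b) (hE₂c b) C hCcl) φ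
  have hS : ∀ b, ∃ a : K,
      (∀ w ∈ ⇑φ '' {z : ↥C | z.val ∈ E b ∩ C}, w b ≠ a) ∧
      (∀ w ∈ ⇑φ '' {z : ↥C | z.val ∈ E₂ b ∩ C}, w b ≠ a) := by
    intro b
    have h1 := hu_proj K hseg hunc _ (hH b) b
    have h2 := hu_proj K hseg hunc _ (hH₂ b) b
    have h3 : #(({a : K | ∃ w ∈ ⇑φ '' {z : ↥C | z.val ∈ E b ∩ C}, w b = a} ∪
        {a : K | ∃ w ∈ ⇑φ '' {z : ↥C | z.val ∈ E₂ b ∩ C}, w b = a}) : Set K) < #K :=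
      lt_of_le_of_lt (Cardinal.mk_union_le _ _) (Cardinal.add_lt_of_lt hunc.le h1 h2)
    have hne : ({a : K | ∃ w ∈ ⇑φ '' {z : ↥C | z.val ∈ E b ∩ C}, w b = a} ∪
        {a : K | ∃ w ∈ ⇑φ '' {z : ↥C | z.val ∈ E₂ b ∩ C}, w b = a}) ≠ Set.univ := by
      intro h
      rw [h, Cardinal.mk_univ] at h3
      exact absurd h3 (lt_irrefl _)
    rcases Set.ne_univ_iff_exists_notMem _ |>.mp hne with ⟨a, ha⟩
    rw [Set.mem_union, not_or] at ha
    refine ⟨a, fun w hw he => ha.1 ⟨w, hw, he⟩, fun w hw he => ha.2 ⟨w, hw, he⟩⟩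
  choose x hx1 hx2 using hS
  have hxC' : (φ.symm x).val ∈ C := (φ.symm x).2
  by_cases hmem : (φ.symm x).val ∈ ⋃ b, E b
  · rcases Set.mem_iUnion.mp hmem with ⟨b, hb⟩
    exact hx1 b x ⟨φ.symm x, ⟨hb, hxC'⟩, φ.apply_symm_apply x⟩ rfl
  · have hA₂mem : (φ.symm x).val ∈ A₂ := ⟨hxC', hmem⟩
    have hB₂mem := hB₂eq ▸ hsub₂ hA₂mem
    rcases Set.mem_iUnion.mp hB₂mem with ⟨b, hb⟩
    exact hx2 b x ⟨φ.symm x, ⟨hb, hxC'⟩, φ.apply_symm_apply x⟩ rfl
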